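/- For a bounded self-adjoint operator A on a Hilbert space whose spectrum is contained in the open interval (0,1), the identity log(A⁻¹ - 1) = ∫₀^∞ [(A + μ)⁻¹ - (1 - A + μ)⁻¹] dμ holds, where the operator functions are defined by the continuous functional calculus. -/

import Mathlib

open MeasureTheory

lemma aux_integrable_inv_sq {m : ℝ} (hm : 0 < m) :
    IntegrableOn (fun μ : ℝ => ((m + μ) ^ 2)⁻¹) (Set.Ioi 0) := by
  have key : ∀ μ ∈ Set.Ioi (0:ℝ), HasDerivAt (fun μ : ℝ => -(m + μ)⁻¹)
      (((m + μ) ^ 2)⁻¹) μ := by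
    intro μ hμ
    have hμ0 : (0:ℝ) < μ := hμ
    have hne : m + μ ≠ 0 := by positivity
    have h1 : HasDerivAt (fun μ : ℝ => m + μ) 1 μ := (hasDerivAt_id μ).const_add m
    have h2 := (h1.inv hne).neg
    simp only [neg_div, neg_neg, one_div] at h2
    exact h2
  refine integrableOn_Ioi_deriv_of_nonneg (l := 0) ?_ key (fun x hx => by positivity) ?_
  · have hne : m + (0:ℝ) ≠ 0 := by positivity
    exact (((continuous_const.add continuous_id).continuousAt).inv₀ hne).neg.continuousWithinAt
  · have : Filter.Tendsto (fun μ : ℝ => (m + μ)⁻¹) Filter.atTop (nhds 0) :=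
      Filter.Tendsto.inv_tendsto_atTop (Filter.tendsto_atTop_add_const_left _ m Filter.tendsto_id)
    simpa using this.neg

lemma aux_bound {m x μ : ℝ} (hm : 0 < m) (h1 : m ≤ x) (h2 : m ≤ 1 - x) (hμ : 0 ≤ μ) :
    |(x + μ)⁻¹ - (1 - x + μ)⁻¹| ≤ ((m + μ) ^ 2)⁻¹ := by
  have hx0 : 0 < x := lt_of_lt_of_le hm h1
  have hx1 : 0 < 1 - x := lt_of_lt_of_le hm h2
  have e1 : (x + μ)⁻¹ - (1 - x + μ)⁻¹ = (1 - 2*x) / ((x + μ) * (1 - x + μ)) := by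
    field_simp
    ring
  have habs : |1 - 2*x| ≤ 1 := by
    rw [abs_le]; constructor <;> nlinarith
  have hprod : (m + μ)^2 ≤ (x + μ) * (1 - x + μ) := by nlinarith
  have habs2 : |(x + μ) * (1 - x + μ)| = (x + μ) * (1 - x + μ) := by
    rw [abs_of_pos]; positivity
  rw [e1, abs_div, habs2, div_le_iff₀ (by positivity)]
  calc |1 - 2*x| ≤ 1 := habs
    _ = ((m + μ) ^ 2)⁻¹ * ((m + μ)^2) := by
        rw [inv_mul_cancel₀ (by positivity)]
    _ ≤ ((m + μ) ^ 2)⁻¹ * ((x + μ) * (1 - x + μ)) :=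
        mul_le_mul_of_nonneg_left hprod (by positivity)

lemma aux_scalar {x : ℝ} (hx0 : 0 < x) (hx1 : x < 1) :
    ∫ μ in Set.Ioi (0:ℝ), ((x + μ)⁻¹ - (1 - x + μ)⁻¹) = Real.log (x⁻¹ - 1) := by
  have hx1' : 0 < 1 - x := by linarith
  set f : ℝ → ℝ := fun μ => Real.log (x + μ) - Real.log (1 - x + μ) with hf
  have hderiv : ∀ μ ∈ Set.Ioi (0:ℝ), HasDerivAt f ((x + μ)⁻¹ - (1 - x + μ)⁻¹) μ := by
    intro μ hμ
    have hμ0 : 0 < μ := hμ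
    have h1 : HasDerivAt (fun μ : ℝ => x + μ) 1 μ := (hasDerivAt_id μ).const_add x
    have h2 : HasDerivAt (fun μ : ℝ => 1 - x + μ) 1 μ := (hasDerivAt_id μ).const_add (1 - x)
    have hne1 : x + μ ≠ 0 := by positivity
    have hne2 : 1 - x + μ ≠ 0 := by positivity
    have := (h1.log hne1).sub (h2.log hne2)
    simp only [one_div] at this
    exact this
  have hmain := integral_Ioi_of_hasDerivAt_of_tendsto (f := f)
      (f' := fun μ => (x + μ)⁻¹ - (1 - x + μ)⁻¹) (a := 0) (m := 0) ?_ hderiv ?_ ?_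
  · rw [hmain]
    have : x⁻¹ - 1 = (1 - x) / x := by field_simp
    rw [this, Real.log_div (by positivity) (by positivity)]
    simp [f]
  · -- continuity at 0
    have hne1 : x + (0:ℝ) ≠ 0 := by positivity
    have hne2 : 1 - x + (0:ℝ) ≠ 0 := by positivity
    have c1 : ContinuousAt (fun μ : ℝ => Real.log (x + μ)) 0 :=
      (Real.continuousAt_log hne1).comp ((continuous_const.add continuous_id).continuousAt)
    have c2 : ContinuousAt (fun μ : ℝ => Real.log (1 - x + μ)) 0 :=
      (Real.continuousAt_log hne2).comp ((continuous_const.add continuous_id).continuousAt)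
    exact (c1.sub c2).continuousWithinAt
  · -- integrability
    set m := min x (1 - x) with hm
    have hm0 : 0 < m := lt_min hx0 hx1'
    refine (aux_integrable_inv_sq hm0).mono' ?_ ?_
    · refine (ContinuousOn.aestronglyMeasurable ?_ measurableSet_Ioi)
      intro μ hμ
      have hμ0 : 0 < μ := hμ
      have hne1 : x + μ ≠ 0 := by positivity
      have hne2 : 1 - x + μ ≠ 0 := by positivity
      exact (((continuousAt_const.add continuousAt_id).inv₀ hne1).sub
        ((continuousAt_const.add continuousAt_id).inv₀ hne2)).continuousWithinAt
    · refine (ae_restrict_iff' measurableSet_Ioi).mpr (Filter.Eventually.of_forall ?_)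
      intro μ hμ
      have hμ0 : 0 < μ := hμ
      have h1 : m + μ ≤ x + μ := add_le_add_left (min_le_left _ _) μ
      have h2 : m + μ ≤ 1 - x + μ := add_le_add_left (min_le_right _ _) μ
      have hmμ : 0 < m + μ := by positivity
      have e1 : (x + μ)⁻¹ - (1 - x + μ)⁻¹ = (1 - 2*x) / ((x + μ) * (1 - x + μ)) := by
        field_simp
        ring
      have habs : |1 - 2*x| ≤ 1 := by
        rw [abs_le]; constructor <;> nlinarith
      have hprod : (m + μ)^2 ≤ (x + μ) * (1 - x + μ) := by nlinarith
      have habs2 : |(x + μ) * (1 - x + μ)| = (x + μ) * (1 - x + μ) := by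
        rw [abs_of_pos]; positivity
      rw [Real.norm_eq_abs, e1, abs_div, habs2, div_le_iff₀ (by positivity)]
      calc |1 - 2*x| ≤ 1 := habs
        _ = ((m + μ) ^ 2)⁻¹ * ((m + μ)^2) := by
            rw [inv_mul_cancel₀ (by positivity)]
        _ ≤ ((m + μ) ^ 2)⁻¹ * ((x + μ) * (1 - x + μ)) :=
            mul_le_mul_of_nonneg_left hprod (by positivity)
  · -- tendsto at top
    have h0 : Filter.Tendsto (fun μ : ℝ => (1 - x + μ)⁻¹) Filter.atTop (nhds 0) :=
      Filter.Tendsto.inv_tendsto_atTop (Filter.tendsto_atTop_add_const_left _ _ Filter.tendsto_id)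
    have hratio : Filter.Tendsto (fun μ : ℝ => (x + μ) / (1 - x + μ)) Filter.atTop (nhds 1) := by
      have heq : ∀ᶠ μ in Filter.atTop, 1 + (2*x - 1) * (1 - x + μ)⁻¹
          = (x + μ) / (1 - x + μ) := by
        filter_upwards [Filter.eventually_gt_atTop (0:ℝ)] with μ hμ
        have hne2 : 1 - x + μ ≠ 0 := by positivity
        field_simp
        ring
      have : Filter.Tendsto (fun μ : ℝ => 1 + (2*x - 1) * (1 - x + μ)⁻¹)
          Filter.atTop (nhds (1 + (2*x-1) * 0)) :=
        Filter.Tendsto.const_add _ (h0.const_mul _)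
      simpa using this.congr' heq
    have hlog : Filter.Tendsto (fun μ : ℝ => Real.log ((x + μ) / (1 - x + μ)))
        Filter.atTop (nhds 0) := by
      have := (Real.continuousAt_log (by norm_num : (1:ℝ) ≠ 0)).tendsto.comp hratio
      simpa [Function.comp_def] using this
    refine hlog.congr' ?_
    filter_upwards [Filter.eventually_gt_atTop (0:ℝ)] with μ hμ
    rw [Real.log_div (by positivity) (by positivity)]

/-- For a bounded self-adjoint operator `A` with spectrum contained in `(0,1)`,
`log (A⁻¹ - 1) = ∫₀^∞ [(A+μ)⁻¹ - (1-A+μ)⁻¹] dμ`, the operator functions being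
defined via the continuous functional calculus and the integral being a Bochner
integral of bounded operators. -/
theorem log_inv_sub_one_eq_integral_resolvents
    {H : Type*} [NormedAddCommGroup H] [InnerProductSpace ℂ H] [CompleteSpace H]
    (A : H →L[ℂ] H) (hA : IsSelfAdjoint A)
    (hspec : spectrum ℝ A ⊆ Set.Ioo (0 : ℝ) 1) :
    cfc (fun x : ℝ => Real.log (x⁻¹ - 1)) A
      = ∫ μ in Set.Ioi (0 : ℝ),
          (cfc (fun x : ℝ => (x + μ)⁻¹) A - cfc (fun x : ℝ => (1 - x + μ)⁻¹) A) := by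
  have hcpt : IsCompact (spectrum ℝ A) :=
    ContinuousFunctionalCalculus.isCompact_spectrum A
  haveI : CompactSpace (spectrum ℝ A) := isCompact_iff_compactSpace.mp hcpt
  obtain ⟨ε, hε0, hε⟩ : ∃ ε > 0, ∀ x ∈ spectrum ℝ A, ε ≤ x ∧ ε ≤ 1 - x := by
    rcases (spectrum ℝ A).eq_empty_or_nonempty with h | h
    · exact ⟨1/4, by norm_num, fun x hx => by rw [h] at hx; exact absurd hx (Set.notMem_empty x)⟩
    · have ha := hspec (hcpt.sInf_mem h)
      have hb := hspec (hcpt.sSup_mem h)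
      refine ⟨min (sInf (spectrum ℝ A)) (1 - sSup (spectrum ℝ A)),
        lt_min ha.1 (by linarith [hb.2]), fun x hx => ?_⟩
      have h1 := csInf_le hcpt.bddBelow hx
      have h2 := le_csSup hcpt.bddAbove hx
      have h3 := min_le_left (sInf (spectrum ℝ A)) (1 - sSup (spectrum ℝ A))
      have h4 := min_le_right (sInf (spectrum ℝ A)) (1 - sSup (spectrum ℝ A))
      constructor <;> linarith
  -- the family of continuous functions on the spectrum
  have hne : ∀ (μ : ℝ), 0 ≤ μ → ∀ x : spectrum ℝ A, (x : ℝ) + μ ≠ 0 := by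
    intro μ hμ x
    have := (hε x x.2).1
    exact ne_of_gt (by linarith)
  have hne' : ∀ (μ : ℝ), 0 ≤ μ → ∀ x : spectrum ℝ A, 1 - (x : ℝ) + μ ≠ 0 := by
    intro μ hμ x
    have := (hε x x.2).2
    exact ne_of_gt (by linarith)
  let F : ℝ → C(spectrum ℝ A, ℝ) := fun μ =>
    ⟨fun x => ((x : ℝ) + (μ ⊔ 0))⁻¹ - (1 - (x : ℝ) + (μ ⊔ 0))⁻¹, by
      refine Continuous.sub ?_ ?_
      · exact (continuous_subtype_val.add continuous_const).inv₀
          (hne _ (le_max_right _ _))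
      · exact ((continuous_const.sub continuous_subtype_val).add continuous_const).inv₀
          (hne' _ (le_max_right _ _))⟩
  have hFcont : Continuous F := by
    refine ContinuousMap.continuous_of_continuous_uncurry _ ?_
    refine Continuous.sub ?_ ?_
    · exact (continuous_subtype_val.comp continuous_snd |>.add
        ((continuous_fst.max continuous_const))).inv₀
        (fun p => hne _ (le_max_right _ _) p.2)
    · exact ((continuous_const.sub (continuous_subtype_val.comp continuous_snd)).add
        ((continuous_fst.max continuous_const))).inv₀
        (fun p => hne' _ (le_max_right _ _) p.2)
  have hFint : IntegrableOn F (Set.Ioi (0:ℝ)) := by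
    refine (aux_integrable_inv_sq hε0).mono' hFcont.aestronglyMeasurable ?_
    refine (ae_restrict_iff' measurableSet_Ioi).mpr (Filter.Eventually.of_forall ?_)
    intro μ hμ
    have hμ0 : (0:ℝ) < μ := hμ
    have hsup : μ ⊔ 0 = μ := sup_eq_left.mpr hμ0.le
    rw [ContinuousMap.norm_le _ (by positivity)]
    intro x
    have := aux_bound hε0 (hε x x.2).1 (hε x x.2).2 hμ0.le
    simpa [F, hsup, Real.norm_eq_abs] using this
  let Φ : C(spectrum ℝ A, ℝ) →L[ℝ] (H →L[ℂ] H) := cfcL (R := ℝ) hA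
  -- the integrand equals Φ ∘ F on Ioi 0
  have hkey : Set.EqOn
      (fun μ : ℝ => cfc (fun x : ℝ => (x + μ)⁻¹) A - cfc (fun x : ℝ => (1 - x + μ)⁻¹) A)
      (fun μ => Φ (F μ)) (Set.Ioi 0) := by
    intro μ hμ
    have hμ0 : (0:ℝ) < μ := hμ
    have hsup : μ ⊔ 0 = μ := sup_eq_left.mpr hμ0.le
    have h1 : ContinuousOn (fun x : ℝ => (x + μ)⁻¹) (spectrum ℝ A) := by
      refine ContinuousOn.inv₀ (Continuous.continuousOn (by continuity)) ?_
      intro x hx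
      exact hne μ hμ0.le ⟨x, hx⟩
    have h2 : ContinuousOn (fun x : ℝ => (1 - x + μ)⁻¹) (spectrum ℝ A) := by
      refine ContinuousOn.inv₀ (Continuous.continuousOn (by continuity)) ?_
      intro x hx
      exact hne' μ hμ0.le ⟨x, hx⟩
    simp only
    rw [cfc_apply (fun x : ℝ => (x + μ)⁻¹) A hA h1,
      cfc_apply (fun x : ℝ => (1 - x + μ)⁻¹) A hA h2]
    have : F μ = (⟨_, h1.restrict⟩ : C(spectrum ℝ A, ℝ)) - ⟨_, h2.restrict⟩ := by
      ext x
      simp [F, hsup]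
    rw [show Φ (F μ) = cfcHom hA (F μ) from rfl, this, map_sub]
  rw [setIntegral_congr_fun measurableSet_Ioi hkey, Φ.integral_comp_comm hFint]
  -- identify the integral of F
  have hgc : Continuous (fun x : spectrum ℝ A => Real.log ((x : ℝ)⁻¹ - 1)) := by
    have hx0 : ∀ x : spectrum ℝ A, (x:ℝ) ≠ 0 := fun x =>
      ne_of_gt (lt_of_lt_of_le hε0 (hε x x.2).1)
    refine Continuous.log ?_ ?_
    · exact (continuous_subtype_val.inv₀ hx0).sub continuous_const
    · intro x
      have h1 := (hspec x.2).1
      have h2 := (hspec x.2).2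
      have : (1:ℝ) < (x:ℝ)⁻¹ := (one_lt_inv₀ h1).mpr h2
      exact sub_ne_zero.mpr (ne_of_gt (by linarith))
  have hInt_eq : (∫ μ in Set.Ioi (0:ℝ), F μ)
      = ⟨fun x : spectrum ℝ A => Real.log ((x : ℝ)⁻¹ - 1), hgc⟩ := by
    ext x
    have hev := (ContinuousMap.evalCLM (R := ℝ) x).integral_comp_comm hFint
    have hev' : (∫ μ in Set.Ioi (0:ℝ), F μ) x = ∫ μ in Set.Ioi (0:ℝ), F μ x := hev.symm
    show (∫ μ in Set.Ioi (0:ℝ), F μ) x = Real.log ((x:ℝ)⁻¹ - 1)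
    rw [hev']
    have : ∫ μ in Set.Ioi (0:ℝ), F μ x
        = ∫ μ in Set.Ioi (0:ℝ), (((x:ℝ) + μ)⁻¹ - (1 - (x:ℝ) + μ)⁻¹) := by
      refine setIntegral_congr_fun measurableSet_Ioi ?_
      intro μ hμ
      have hμ0 : (0:ℝ) < μ := hμ
      simp [F, sup_eq_left.mpr hμ0.le]
    rw [this]
    exact aux_scalar (hspec x.2).1 (hspec x.2).2
  rw [hInt_eq]
  have hgo : ContinuousOn (fun x : ℝ => Real.log (x⁻¹ - 1)) (spectrum ℝ A) := by
    refine ContinuousOn.log ?_ ?_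
    · refine ContinuousOn.sub (ContinuousOn.inv₀ continuousOn_id ?_) continuousOn_const
      intro x hx
      exact ne_of_gt (lt_of_lt_of_le hε0 (hε x hx).1)
    · intro x hx
      have h1 := (hspec hx).1
      have h2 := (hspec hx).2
      have : (1:ℝ) < x⁻¹ := (one_lt_inv₀ h1).mpr h2
      exact sub_ne_zero.mpr (ne_of_gt (by linarith))
  rw [cfc_apply (fun x : ℝ => Real.log (x⁻¹ - 1)) A hA hgo]
  rfl
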